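/- Let X ⊂ ℝ^n be a convex compact set containing each X^i, and set D := max_{x∈X} ‖x‖. Suppose L_x > 0 satisfies ‖x^{i⋆}(z) − x^{i⋆}(w)‖ ≤ L_x ‖z − w‖ for all i and all z, w ∈ ℝ^n, and L_J > 0 satisfies |J^i(x_a,z_a) − J^i(x_b,z_b)| ≤ L_J (‖x_a − x_b‖ + ‖z_a − z_b‖) for all i and all x_a, x_b, z_a, z_b ∈ X. Set K := 2 L_J (L_x + 1) D. If z̄ = (z̄^1;…;z̄^N) is a fixed point of A_ν and x̄^i := x^{i⋆}(z̄^i), then for every i, J^i(x̄^i, (1/N) Σ_{j=1}^N x̄^j) ≤ min_{y∈X^i} J^i(y, (1/N)(y + Σ_{j≠i} x̄^j)) + ε, where ε := K (‖P^ν − (1/N)·1_N 1_Nᵀ‖_∞ + 1/N) and ‖·‖_∞ is the maximum-row-sum matrix norm. (Quantitative form of Theorem 2, established in its proof.) -/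

import Mathlib

open Matrix Filter Topology Finset
open scoped Kronecker

noncomputable section

/-- Euclidean norm of a finitely-indexed real vector. -/
def eunorm {ι : Type*} [Fintype ι] (x : ι → ℝ) : ℝ := Real.sqrt (x ⬝ᵥ x)

/-- `S`-weighted norm `‖x‖_S = √(xᵀ S x)`. -/
def wnorm {ι : Type*} [Fintype ι] (S : Matrix ι ι ℝ) (x : ι → ℝ) : ℝ :=
  Real.sqrt (x ⬝ᵥ S.mulVec x)

/-- Quadratic cost `J(x,z) = q·xᵀQx + 2(Cz+c)ᵀx`. -/
def cost {n : ℕ} (Q C : Matrix (Fin n) (Fin n) ℝ) (qi : ℝ) (ci : Fin n → ℝ)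
    (x z : Fin n → ℝ) : ℝ :=
  qi * (x ⬝ᵥ Q.mulVec x) + 2 * ((C.mulVec z + ci) ⬝ᵥ x)

/-- `xst` is the optimal-response map: for every `z`, `xst z` minimizes the cost over `X`. -/
def IsOptResp {n : ℕ} (X : Set (Fin n → ℝ)) (Q C : Matrix (Fin n) (Fin n) ℝ)
    (qi : ℝ) (ci : Fin n → ℝ) (xst : (Fin n → ℝ) → (Fin n → ℝ)) : Prop :=
  ∀ z, xst z ∈ X ∧ ∀ y ∈ X, cost Q C qi ci (xst z) z ≤ cost Q C qi ci y z

/-- Stacked optimal responses `x⋆(z) = (x^{1⋆}(z^1);…;x^{N⋆}(z^N))`. -/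
def extMap {n N : ℕ} (xstar : Fin N → (Fin n → ℝ) → (Fin n → ℝ))
    (z : Fin N × Fin n → ℝ) : Fin N × Fin n → ℝ :=
  fun p => xstar p.1 (fun j => z (p.1, j)) p.2

/-- Extended aggregation map `A_ν(z) = (P^ν ⊗ I_n) x⋆(z)`. -/
def aggMap {n N : ℕ} (P : Matrix (Fin N) (Fin N) ℝ) (ν : ℕ)
    (xstar : Fin N → (Fin n → ℝ) → (Fin n → ℝ)) (z : Fin N × Fin n → ℝ) :
    Fin N × Fin n → ℝ :=
  ((P ^ ν) ⊗ₖ (1 : Matrix (Fin n) (Fin n) ℝ)).mulVec (extMap xstar z)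

/-- The matrix `(1/N)·1_N 1_Nᵀ` with all entries `1/N`. -/
def avgMat (N : ℕ) : Matrix (Fin N) (Fin N) ℝ := Matrix.of fun _ _ => (N : ℝ)⁻¹

/-- Mean-field aggregation map `A(z) = ((1/N)·1 1ᵀ ⊗ I_n) x⋆(z)`. -/
def meanAgg {n N : ℕ} (xstar : Fin N → (Fin n → ℝ) → (Fin n → ℝ))
    (z : Fin N × Fin n → ℝ) : Fin N × Fin n → ℝ :=
  ((avgMat N) ⊗ₖ (1 : Matrix (Fin n) (Fin n) ℝ)).mulVec (extMap xstar z)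

/-- Maximum-row-sum matrix norm `‖A‖_∞`. -/
def rowSumNorm {N : ℕ} (A : Matrix (Fin N) (Fin N) ℝ) : ℝ := ⨆ i, ∑ j, |A i j|

/-- Spectral norm (ℓ²-operator norm) of a real matrix. -/
def specNorm {ι : Type*} [Fintype ι] [DecidableEq ι] (P : Matrix ι ι ℝ) : ℝ :=
  ‖LinearMap.toContinuousLinearMap (Matrix.toEuclideanLin P)‖

/-- Map `A_{m,m}(z) = (P^m ⊗ I_n) x⋆((P^m ⊗ I_n) z)`. -/
def halfAgg {n N : ℕ} (P : Matrix (Fin N) (Fin N) ℝ) (m : ℕ)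
    (xstar : Fin N → (Fin n → ℝ) → (Fin n → ℝ)) (z : Fin N × Fin n → ℝ) :
    Fin N × Fin n → ℝ :=
  ((P ^ m) ⊗ₖ (1 : Matrix (Fin n) (Fin n) ℝ)).mulVec
    (extMap xstar (((P ^ m) ⊗ₖ (1 : Matrix (Fin n) (Fin n) ℝ)).mulVec z))

lemma eunorm_eq_norm {ι : Type*} [Fintype ι] (x : ι → ℝ) :
    eunorm x = ‖(WithLp.linearEquiv 2 ℝ (ι → ℝ)).symm x‖ := by
  unfold eunorm
  rw [EuclideanSpace.norm_eq]
  congr 1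
  simp [dotProduct, Real.norm_eq_abs, sq_abs, sq]

lemma eunorm_nonneg' {ι : Type*} [Fintype ι] (x : ι → ℝ) : 0 ≤ eunorm x :=
  Real.sqrt_nonneg _

lemma eunorm_smul {ι : Type*} [Fintype ι] (a : ℝ) (x : ι → ℝ) :
    eunorm (a • x) = |a| * eunorm x := by
  rw [eunorm_eq_norm, eunorm_eq_norm, _root_.map_smul, norm_smul, Real.norm_eq_abs]

lemma eunorm_add_le {ι : Type*} [Fintype ι] (x y : ι → ℝ) :
    eunorm (x + y) ≤ eunorm x + eunorm y := by
  rw [eunorm_eq_norm, eunorm_eq_norm, eunorm_eq_norm, map_add]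
  exact norm_add_le _ _

lemma eunorm_neg {ι : Type*} [Fintype ι] (x : ι → ℝ) : eunorm (-x) = eunorm x := by
  rw [show -x = (-1 : ℝ) • x by simp, eunorm_smul]; norm_num

lemma eunorm_sub_comm {ι : Type*} [Fintype ι] (x y : ι → ℝ) :
    eunorm (x - y) = eunorm (y - x) := by
  rw [show x - y = -(y - x) by abel, eunorm_neg]

lemma eunorm_sub_le {ι : Type*} [Fintype ι] (x y z : ι → ℝ) :
    eunorm (x - z) ≤ eunorm (x - y) + eunorm (y - z) := by
  have h : x - z = (x - y) + (y - z) := by abel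
  rw [h]; exact eunorm_add_le _ _

lemma eunorm_sub_le_add {ι : Type*} [Fintype ι] (x y : ι → ℝ) :
    eunorm (x - y) ≤ eunorm x + eunorm y := by
  have := eunorm_sub_le x 0 y
  simpa [eunorm_neg, eunorm_sub_comm] using this

lemma eunorm_sum_smul_le {ι κ : Type*} [Fintype ι] [Fintype κ] (w : κ → ℝ) (v : κ → ι → ℝ) :
    eunorm (∑ j, w j • v j) ≤ ∑ j, |w j| * eunorm (v j) := by
  rw [eunorm_eq_norm, map_sum]
  refine (norm_sum_le _ _).trans (le_of_eq ?_)
  refine Finset.sum_congr rfl fun j _ => ?_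
  rw [_root_.map_smul, norm_smul, Real.norm_eq_abs, eunorm_eq_norm]

lemma pow_entry_nonneg {N : ℕ} (P : Matrix (Fin N) (Fin N) ℝ)
    (h : ∀ i j, 0 ≤ P i j) (m : ℕ) : ∀ i j, 0 ≤ (P ^ m) i j := by
  induction m with
  | zero => intro i j; rw [pow_zero, Matrix.one_apply]; split <;> norm_num
  | succ m ih =>
      intro i j; rw [pow_succ, Matrix.mul_apply]
      exact Finset.sum_nonneg fun k _ => mul_nonneg (ih i k) (h k j)

lemma pow_row_sum {N : ℕ} (P : Matrix (Fin N) (Fin N) ℝ)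
    (h : ∀ i, ∑ j, P i j = 1) (m : ℕ) : ∀ i, ∑ j, (P ^ m) i j = 1 := by
  induction m with
  | zero => intro i; simp [Matrix.one_apply]
  | succ m ih =>
      intro i
      simp only [pow_succ, Matrix.mul_apply]
      rw [Finset.sum_comm]
      simp_rw [← Finset.mul_sum, h]
      simpa using ih i

/-- quantitative ε-Nash property of the best responses to a fixed point of `A_ν`,
with `ε = 2 L_J (L_x + 1) D (‖P^ν − (1/N)·1 1ᵀ‖_∞ + 1/N)`. -/
theorem fixedPoint_is_eps_MF_Nash {n N ν : ℕ} (hn : 0 < n) (hN : 0 < N) (hν : 0 < ν)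
    (X : Fin N → Set (Fin n → ℝ))
    (hXne : ∀ i, (X i).Nonempty) (hXconv : ∀ i, Convex ℝ (X i))
    (hXcpt : ∀ i, IsCompact (X i))
    (Q C : Matrix (Fin n) (Fin n) ℝ) (hQ : Q.PosDef)
    (q : Fin N → ℝ) (hq : ∀ i, 0 < q i) (c : Fin N → Fin n → ℝ)
    (P : Matrix (Fin N) (Fin N) ℝ) (hPnn : ∀ i j, 0 ≤ P i j)
    (hPrs : ∀ i, ∑ j, P i j = 1)
    (xstar : Fin N → (Fin n → ℝ) → (Fin n → ℝ))
    (hxstar : ∀ i, IsOptResp (X i) Q C (q i) (c i) (xstar i))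
    (Xbig : Set (Fin n → ℝ)) (hXbigconv : Convex ℝ Xbig) (hXbigcpt : IsCompact Xbig)
    (hXsub : ∀ i, X i ⊆ Xbig)
    (D : ℝ) (hD : ∀ x ∈ Xbig, eunorm x ≤ D)
    (Lx : ℝ) (hLx0 : 0 < Lx)
    (hLx : ∀ i, ∀ z w : Fin n → ℝ, eunorm (xstar i z - xstar i w) ≤ Lx * eunorm (z - w))
    (LJ : ℝ) (hLJ0 : 0 < LJ)
    (hLJ : ∀ i, ∀ xa ∈ Xbig, ∀ xb ∈ Xbig, ∀ za ∈ Xbig, ∀ zb ∈ Xbig,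
      |cost Q C (q i) (c i) xa za - cost Q C (q i) (c i) xb zb|
        ≤ LJ * (eunorm (xa - xb) + eunorm (za - zb)))
    (zbar : Fin N × Fin n → ℝ) (hfix : aggMap P ν xstar zbar = zbar)
    (xbar : Fin N → Fin n → ℝ)
    (hxbar : ∀ i, xbar i = xstar i (fun j => zbar (i, j))) :
    ∀ i, ∀ y ∈ X i,
      cost Q C (q i) (c i) (xbar i) ((N : ℝ)⁻¹ • ∑ j, xbar j)
        ≤ cost Q C (q i) (c i) y
            ((N : ℝ)⁻¹ • (y + ∑ j ∈ Finset.univ.erase i, xbar j))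
          + 2 * LJ * (Lx + 1) * D * (rowSumNorm (P ^ ν - avgMat N) + (N : ℝ)⁻¹) := by
  intro i y hy
  have hyB : y ∈ Xbig := hXsub i hy
  have hxmem : ∀ j, xbar j ∈ Xbig := fun j => hXsub j (by rw [hxbar]; exact (hxstar j _).1)
  have hNinv : (0:ℝ) < (N : ℝ)⁻¹ := by positivity
  have hD0 : 0 ≤ D := by
    obtain ⟨x, hx⟩ := hXne i
    exact le_trans (eunorm_nonneg' x) (hD x (hXsub i hx))
  have hsum1 : ∑ _j : Fin N, (N : ℝ)⁻¹ = 1 := by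
    rw [Finset.sum_const]
    simp [mul_inv_cancel₀ (show (N:ℝ) ≠ 0 by positivity)]
  set zi : Fin n → ℝ := fun k => zbar (i, k) with hzidef
  have hzi_eq : zi = ∑ j, (P ^ ν) i j • xbar j := by
    funext k
    have hf : zi k = aggMap P ν xstar zbar (i, k) := (congrFun hfix (i, k)).symm
    rw [hf]
    simp only [aggMap, Matrix.mulVec, dotProduct, Fintype.sum_prod_type,
      Matrix.kroneckerMap_apply, Matrix.one_apply, extMap, mul_ite, mul_one, mul_zero,
      ite_mul, zero_mul, Finset.sum_ite_eq, Finset.mem_univ, if_true]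
    rw [Finset.sum_apply]
    refine Finset.sum_congr rfl fun j _ => ?_
    rw [hxbar j, Pi.smul_apply, smul_eq_mul]
  have hcomb : ∀ (w : Fin N → ℝ), (∀ j, 0 ≤ w j) → ∑ j, w j = 1 →
      ∀ (v : Fin N → Fin n → ℝ), (∀ j, v j ∈ Xbig) → ∑ j, w j • v j ∈ Xbig := by
    intro w hw hs v hv
    exact hXbigconv.sum_mem (fun j _ => hw j) hs (fun j _ => hv j)
  have hziB : zi ∈ Xbig := by
    rw [hzi_eq]
    exact hcomb _ (pow_entry_nonneg P hPnn ν i) (pow_row_sum P hPrs ν i) _ hxmem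
  set avg : Fin n → ℝ := (N : ℝ)⁻¹ • ∑ j, xbar j with havgdef
  have havg_sum : avg = ∑ j, (N : ℝ)⁻¹ • xbar j := Finset.smul_sum
  have havgB : avg ∈ Xbig := by
    rw [havg_sum]
    exact hcomb _ (fun j => le_of_lt hNinv) hsum1 _ hxmem
  set yavg : Fin n → ℝ := (N : ℝ)⁻¹ • (y + ∑ j ∈ Finset.univ.erase i, xbar j) with hyavgdef
  set v : Fin N → Fin n → ℝ := fun j => if j = i then y else xbar j with hvdef
  have hvsum : y + ∑ j ∈ Finset.univ.erase i, xbar j = ∑ j, v j := by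
    rw [← Finset.add_sum_erase Finset.univ v (Finset.mem_univ i)]
    congr 1
    · simp [hvdef]
    · exact Finset.sum_congr rfl fun j hj => by
        simp [hvdef, Finset.ne_of_mem_erase hj]
  have hyavgB : yavg ∈ Xbig := by
    rw [hyavgdef, hvsum, Finset.smul_sum]
    refine hcomb _ (fun j => le_of_lt hNinv) hsum1 _ fun j => ?_
    by_cases h : j = i <;> simp [hvdef, h, hyB, hxmem j]
  -- bound on eunorm (avg - zi)
  set s : ℝ := ∑ j, |(P ^ ν - avgMat N) i j| with hsdef
  have hs0 : 0 ≤ s := Finset.sum_nonneg fun j _ => abs_nonneg _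
  have hsδ : s ≤ rowSumNorm (P ^ ν - avgMat N) := by
    rw [hsdef]; unfold rowSumNorm
    exact le_ciSup (f := fun i => ∑ j, |(P ^ ν - avgMat N) i j|)
      (Set.Finite.bddAbove (Set.finite_range _)) i
  have hδ0 : 0 ≤ rowSumNorm (P ^ ν - avgMat N) := le_trans hs0 hsδ
  have b1 : eunorm (avg - zi) ≤ s * D := by
    have he : avg - zi = ∑ j, ((N : ℝ)⁻¹ - (P ^ ν) i j) • xbar j := by
      rw [havg_sum, hzi_eq, ← Finset.sum_sub_distrib]
      exact Finset.sum_congr rfl fun j _ => (sub_smul _ _ _).symm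
    rw [he]
    refine (eunorm_sum_smul_le _ _).trans ?_
    rw [hsdef, Finset.sum_mul]
    refine Finset.sum_le_sum fun j _ => ?_
    have h1 : |(N : ℝ)⁻¹ - (P ^ ν) i j| = |(P ^ ν - avgMat N) i j| := by
      rw [abs_sub_comm]
      have h2 : (P ^ ν - avgMat N) i j = (P ^ ν) i j - (N : ℝ)⁻¹ := by
        simp [avgMat, Matrix.sub_apply]
      rw [h2]
    rw [h1]
    exact mul_le_mul_of_nonneg_left (hD _ (hxmem j)) (abs_nonneg _)
  have b2 : eunorm (avg - yavg) ≤ (N : ℝ)⁻¹ * (2 * D) := by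
    have he : avg - yavg = (N : ℝ)⁻¹ • (xbar i - y) := by
      rw [havgdef, hyavgdef, ← smul_sub]
      congr 1
      rw [← Finset.add_sum_erase Finset.univ xbar (Finset.mem_univ i)]
      abel
    rw [he, eunorm_smul, abs_of_pos hNinv]
    refine mul_le_mul_of_nonneg_left ?_ (le_of_lt hNinv)
    calc eunorm (xbar i - y) ≤ eunorm (xbar i) + eunorm y := eunorm_sub_le_add _ _
    _ ≤ D + D := add_le_add (hD _ (hxmem i)) (hD _ hyB)
    _ = 2 * D := by ring
  have b3 : eunorm (zi - yavg) ≤ s * D + (N : ℝ)⁻¹ * (2 * D) := by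
    refine (eunorm_sub_le zi avg yavg).trans ?_
    rw [eunorm_sub_comm zi avg]
    exact add_le_add b1 b2
  -- optimality
  have hopt : cost Q C (q i) (c i) (xbar i) zi ≤ cost Q C (q i) (c i) y zi := by
    rw [hxbar i]
    exact (hxstar i zi).2 y hy
  -- Lipschitz estimates
  have hLa := hLJ i (xbar i) (hxmem i) (xbar i) (hxmem i) avg havgB zi hziB
  have hLb := hLJ i y hyB y hyB zi hziB yavg hyavgB
  rw [sub_self, show eunorm (0 : Fin n → ℝ) = 0 by simp [eunorm], zero_add] at hLa hLb
  have hLa' : cost Q C (q i) (c i) (xbar i) avg - cost Q C (q i) (c i) (xbar i) zi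
      ≤ LJ * eunorm (avg - zi) := le_trans (le_abs_self _) hLa
  have hLb' : cost Q C (q i) (c i) y zi - cost Q C (q i) (c i) y yavg
      ≤ LJ * eunorm (zi - yavg) := le_trans (le_abs_self _) hLb
  have hm1 : LJ * eunorm (avg - zi) ≤ LJ * (s * D) :=
    mul_le_mul_of_nonneg_left b1 (le_of_lt hLJ0)
  have hm2 : LJ * eunorm (zi - yavg) ≤ LJ * (s * D + (N : ℝ)⁻¹ * (2 * D)) :=
    mul_le_mul_of_nonneg_left b3 (le_of_lt hLJ0)
  have hfinal : 2 * LJ * D * (s + (N : ℝ)⁻¹)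
      ≤ 2 * LJ * (Lx + 1) * D * (rowSumNorm (P ^ ν - avgMat N) + (N : ℝ)⁻¹) := by
    have h1 : s + (N : ℝ)⁻¹ ≤ rowSumNorm (P ^ ν - avgMat N) + (N : ℝ)⁻¹ :=
      add_le_add_left hsδ _
    nlinarith [mul_nonneg (le_of_lt hLJ0) hD0, mul_nonneg (mul_nonneg (le_of_lt hLJ0) hD0) (add_nonneg hδ0 (le_of_lt hNinv)), mul_nonneg (mul_nonneg (le_of_lt hLx0) (le_of_lt hLJ0)) (mul_nonneg hD0 (add_nonneg hδ0 (le_of_lt hNinv)))]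
  linarith [hLa', hLb', hm1, hm2, hopt, hfinal]
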